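/- The limit as m → ∞ (with n = 4m) of 4·(∑_{k=1}^{n/4} (cos((k-1)π/(n-3)) − cos((2k-1)π/(2n-2))) + ∑_{k=n/4+1}^{n/2−1} (cos((2k-1)π/(2n-2)) − cos((k-1)π/(n-3)))) equals (8 − 8√2 + 2π)/π. -/

import Mathlib

open Real Filter Finset


lemma cos_tel (θ : ℝ) (M : ℕ) :
    (2 * Real.sin (θ/2)) * ∑ k ∈ Finset.range M, Real.cos (k * θ)
      = Real.sin (((M:ℝ) - 1/2) * θ) + Real.sin (θ/2) := by
  induction M with
  | zero =>
    simp only [Finset.range_zero, Finset.sum_empty, mul_zero, Nat.cast_zero]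
    rw [show ((0:ℝ) - 1/2) * θ = -(θ/2) by ring, Real.sin_neg]; ring
  | succ M ih =>
    rw [Finset.sum_range_succ, mul_add, ih]
    have h : Real.sin ((((M:ℝ)+1) - 1/2) * θ) - Real.sin (((M:ℝ) - 1/2) * θ)
        = 2 * Real.sin (θ/2) * Real.cos ((M:ℝ) * θ) := by
      rw [Real.sin_sub_sin]; ring_nf
    push_cast
    push_cast at h
    linarith [h]

lemma cos_tel2 (φ : ℝ) (M : ℕ) :
    (2 * Real.sin φ) * ∑ k ∈ Finset.range M, Real.cos ((2*(k:ℝ)+1) * φ)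
      = Real.sin (2*(M:ℝ)*φ) := by
  induction M with
  | zero => simp
  | succ M ih =>
    rw [Finset.sum_range_succ, mul_add, ih]
    have h : Real.sin (2*((M:ℝ)+1)*φ) - Real.sin (2*(M:ℝ)*φ)
        = 2 * Real.sin φ * Real.cos ((2*(M:ℝ)+1) * φ) := by
      rw [Real.sin_sub_sin]; ring_nf
    push_cast
    linarith [h]

lemma lim_sin_div : Tendsto (fun t : ℝ => Real.sin t / t) (nhdsWithin 0 {0}ᶜ) (nhds 1) := by
  have h := (Real.hasDerivAt_sin 0)
  rw [hasDerivAt_iff_tendsto_slope] at h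
  simpa [slope_fun_def, Real.sin_zero, Real.cos_zero, div_eq_inv_mul] using h

lemma lim_div_sin : Tendsto (fun t : ℝ => t / Real.sin t) (nhdsWithin 0 {0}ᶜ) (nhds 1) := by
  have h := lim_sin_div.inv₀ (by norm_num)
  exact (by norm_num : ((1:ℝ))⁻¹ = 1) ▸ h.congr (fun t => by rw [inv_div])

lemma lim_cos_sub_one : Tendsto (fun t : ℝ => (Real.cos t - 1) / t) (nhdsWithin 0 {0}ᶜ) (nhds 0) := by
  have h := (Real.hasDerivAt_cos 0)
  rw [hasDerivAt_iff_tendsto_slope] at h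
  simpa [slope_fun_def, Real.cos_zero, Real.sin_zero, div_eq_inv_mul] using h

lemma lim_slope_pi4 : Tendsto (fun s : ℝ => (Real.sin (Real.pi/4 + s) - Real.sin (Real.pi/4)) / s)
    (nhdsWithin 0 {0}ᶜ) (nhds (Real.sqrt 2 / 2)) := by
  have h := (Real.hasDerivAt_sin (Real.pi/4))
  rw [hasDerivAt_iff_tendsto_slope] at h
  have hmap : Tendsto (fun s : ℝ => Real.pi/4 + s) (nhdsWithin 0 {0}ᶜ)
      (nhdsWithin (Real.pi/4) {Real.pi/4}ᶜ) := by
    apply tendsto_nhdsWithin_of_tendsto_nhds_of_eventually_within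
    · have : Tendsto (fun s : ℝ => Real.pi/4 + s) (nhds 0) (nhds (Real.pi/4)) := by
        simpa using ((tendsto_const_nhds (x := Real.pi/4) (f := nhds (0:ℝ))).add (tendsto_id (α := ℝ)))
      exact this.mono_left nhdsWithin_le_nhds
    · filter_upwards [self_mem_nhdsWithin] with s hs
      simp only [Set.mem_compl_iff, Set.mem_singleton_iff] at hs ⊢
      intro hc; exact hs (by linarith)
  have h2 := h.comp hmap
  rw [Real.cos_pi_div_four] at h2
  have : (fun s : ℝ => (Real.sin (Real.pi/4 + s) - Real.sin (Real.pi/4)) / s)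
      = (slope Real.sin (Real.pi/4)) ∘ (fun s => Real.pi/4 + s) := by
    funext s
    simp [slope_fun_def, Function.comp, Real.sin_pi_div_four]
    ring_nf
  rw [this]
  exact h2

noncomputable def Hf (t : ℝ) : ℝ := (Real.sin (Real.pi/4 + t/2) - Real.sin (Real.pi/4)) / Real.sin t
noncomputable def Rf (t : ℝ) : ℝ := 1 / Real.sin t - 1 / t
noncomputable def Qf (t : ℝ) : ℝ := (Real.cos t - 1) / Real.sin t

lemma mem_pos : ∀ᶠ t : ℝ in nhdsWithin 0 (Set.Ioi 0), 0 < t ∧ t < 1 := by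
  filter_upwards [Ioo_mem_nhdsGT_of_mem (by norm_num : (0:ℝ) ∈ Set.Ico 0 1)] with t ht
  exact ⟨ht.1, ht.2⟩

lemma sin_pos_small {t : ℝ} (h : 0 < t ∧ t < 1) : 0 < Real.sin t :=
  Real.sin_pos_of_pos_of_lt_pi h.1 (h.2.trans (by linarith [Real.pi_gt_three]))

lemma le_ne : nhdsWithin (0:ℝ) (Set.Ioi 0) ≤ nhdsWithin 0 {0}ᶜ :=
  nhdsWithin_mono _ (fun t ht => ne_of_gt ht)

lemma lim_Q : Tendsto Qf (nhdsWithin 0 (Set.Ioi 0)) (nhds 0) := by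
  have h := (lim_cos_sub_one.mono_left le_ne).mul (lim_div_sin.mono_left le_ne)
  rw [show (0:ℝ) * 1 = 0 by ring] at h
  apply h.congr'
  filter_upwards [mem_pos] with t ht
  have hs : Real.sin t ≠ 0 := ne_of_gt (sin_pos_small ht)
  have ht0 : t ≠ 0 := ne_of_gt ht.1
  unfold Qf
  field_simp

lemma lim_H : Tendsto Hf (nhdsWithin 0 (Set.Ioi 0)) (nhds (Real.sqrt 2 / 4)) := by
  have hmap : Tendsto (fun t : ℝ => t/2) (nhdsWithin 0 (Set.Ioi 0)) (nhdsWithin 0 {0}ᶜ) := by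
    apply tendsto_nhdsWithin_of_tendsto_nhds_of_eventually_within
    · have h0 : Tendsto (fun t : ℝ => t/2) (nhds (0:ℝ)) (nhds ((0:ℝ)/2)) :=
        (tendsto_id (α := ℝ)).div_const 2
      norm_num at h0
      exact h0.mono_left nhdsWithin_le_nhds
    · filter_upwards [self_mem_nhdsWithin] with t ht
      simp only [Set.mem_compl_iff, Set.mem_singleton_iff]
      intro hc; rw [Set.mem_Ioi] at ht; nlinarith
  have h1 := lim_slope_pi4.comp hmap
  have h2 := (lim_div_sin.mono_left le_ne).div_const 2
  have h := h1.mul h2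
  rw [show Real.sqrt 2 / 2 * (1/2) = Real.sqrt 2 / 4 by ring] at h
  apply h.congr'
  filter_upwards [mem_pos] with t ht
  have hs : Real.sin t ≠ 0 := ne_of_gt (sin_pos_small ht)
  have ht0 : t ≠ 0 := ne_of_gt ht.1
  unfold Hf
  simp only [Function.comp]
  rw [div_div, div_mul_div_comm, div_eq_div_iff (by
    have := sin_pos_small ht
    have : (0:ℝ) < t/2 * (Real.sin t * 2) := by nlinarith [ht.1]
    exact ne_of_gt this) hs]
  ring

lemma lim_R : Tendsto Rf (nhdsWithin 0 (Set.Ioi 0)) (nhds 0) := by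
  have hsq : Tendsto (fun t : ℝ => (t - Real.sin t)/t^2) (nhdsWithin 0 (Set.Ioi 0)) (nhds 0) := by
    apply squeeze_zero' (g := fun t : ℝ => t)
    · filter_upwards [mem_pos] with t ht
      have := Real.sin_lt ht.1
      exact div_nonneg (by linarith) (by positivity)
    · filter_upwards [mem_pos] with t ht
      have h1 := Real.sin_gt_sub_cube ht.1
      have h2 : (0:ℝ) < t^2 := pow_pos ht.1 2
      rw [div_le_iff₀ h2]
      nlinarith
    · exact tendsto_id.mono_left nhdsWithin_le_nhds
  have h := hsq.mul (lim_div_sin.mono_left le_ne)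
  rw [show (0:ℝ) * 1 = 0 by ring] at h
  apply h.congr'
  filter_upwards [mem_pos] with t ht
  have hs : Real.sin t ≠ 0 := ne_of_gt (sin_pos_small ht)
  have ht0 : t ≠ 0 := ne_of_gt ht.1
  unfold Rf
  field_simp

noncomputable def psi (m : ℕ) : ℝ := Real.pi / (2*(4*(m:ℝ)-3))
noncomputable def phi (m : ℕ) : ℝ := Real.pi / (2*(4*(m:ℝ)-1))
noncomputable def Asum (m M : ℕ) : ℝ := ∑ j ∈ Finset.range M, Real.cos ((j:ℝ)*(2*psi m))
noncomputable def Bsum (m M : ℕ) : ℝ := ∑ j ∈ Finset.range M, Real.cos ((2*(j:ℝ)+1)*(phi m))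

lemma icc_to_range (M : ℕ) (g : ℕ → ℝ) :
    ∑ k ∈ Finset.Icc 1 M, g k = ∑ j ∈ Finset.range M, g (j+1) := by
  induction M with
  | zero => simp
  | succ M ih =>
    rw [Finset.sum_range_succ, ← ih, Finset.sum_Icc_succ_top (by omega)]

lemma icc_split (m : ℕ) (hm : 1 ≤ m) (g : ℕ → ℝ) :
    ∑ k ∈ Finset.Icc 1 m, g k + ∑ k ∈ Finset.Icc (m+1) (2*m-1), g k
      = ∑ k ∈ Finset.Icc 1 (2*m-1), g k := by
  have h1 : Finset.Icc 1 m = Finset.Ico 1 (m+1) := by rw [Finset.Ico_add_one_right_eq_Icc]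
  have h2 : Finset.Icc (m+1) (2*m-1) = Finset.Ico (m+1) (2*m) := by
    ext x; simp only [Finset.mem_Icc, Finset.mem_Ico]; omega
  have h3 : Finset.Icc 1 (2*m-1) = Finset.Ico 1 (2*m) := by
    ext x; simp only [Finset.mem_Icc, Finset.mem_Ico]; omega
  rw [h1, h2, h3]
  exact Finset.sum_Ico_consecutive _ (by omega) (by omega)

lemma hIcc (m : ℕ) (hm : 2 ≤ m) (M : ℕ) :
    ∑ k ∈ Finset.Icc 1 M,
      (Real.cos (((k : ℝ) - 1) * Real.pi / (4 * (m : ℝ) - 3)) -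
        Real.cos ((2 * (k : ℝ) - 1) * Real.pi / (2 * (4 * (m : ℝ)) - 2)))
      = Asum m M - Bsum m M := by
  have hmr : (2:ℝ) ≤ (m:ℝ) := by exact_mod_cast hm
  have hc3 : (4*(m:ℝ)-3) ≠ 0 := by linarith
  have hc1 : (4*(m:ℝ)-1) ≠ 0 := by linarith
  have hc1' : (2*(4*(m:ℝ))-2) ≠ 0 := by linarith
  have hc3' : (2*(4*(m:ℝ)-3)) ≠ 0 := by linarith
  have hc1'' : (2*(4*(m:ℝ)-1)) ≠ 0 := by linarith
  rw [icc_to_range, Asum, Bsum, ← Finset.sum_sub_distrib]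
  refine Finset.sum_congr rfl fun j _ => ?_
  have e1 : (((j+1:ℕ):ℝ) - 1) * Real.pi / (4*(m:ℝ)-3) = (j:ℝ)*(2*psi m) := by
    unfold psi; push_cast; field_simp; ring
  have e2 : (2*((j+1:ℕ):ℝ) - 1) * Real.pi / (2*(4*(m:ℝ))-2) = (2*(j:ℝ)+1)*(phi m) := by
    unfold phi; push_cast; field_simp; ring
  rw [e1, e2]

lemma eqA (m : ℕ) (hs : Real.sin (psi m) ≠ 0) (M : ℕ) :
    Asum m M = (Real.sin (((M:ℝ)-1/2)*(2*psi m)) + Real.sin (psi m))/(2*Real.sin (psi m)) := by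
  have h := cos_tel (2*psi m) M
  rw [show (2*psi m)/2 = psi m by ring] at h
  rw [eq_div_iff (by exact mul_ne_zero two_ne_zero hs)]
  rw [Asum]
  linarith [h]

lemma eqB (m : ℕ) (hs : Real.sin (phi m) ≠ 0) (M : ℕ) :
    Bsum m M = Real.sin (2*(M:ℝ)*(phi m))/(2*Real.sin (phi m)) := by
  have h := cos_tel2 (phi m) M
  rw [eq_div_iff (by exact mul_ne_zero two_ne_zero hs)]
  rw [Bsum]
  linarith [h]

lemma key (m : ℕ) (hm : 2 ≤ m) :
    (4 : ℝ) *
        ((∑ k ∈ Finset.Icc 1 m,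
            (Real.cos (((k : ℝ) - 1) * Real.pi / (4 * (m : ℝ) - 3)) -
              Real.cos ((2 * (k : ℝ) - 1) * Real.pi / (2 * (4 * (m : ℝ)) - 2)))) +
          ∑ k ∈ Finset.Icc (m + 1) (2 * m - 1),
            (Real.cos ((2 * (k : ℝ) - 1) * Real.pi / (2 * (4 * (m : ℝ)) - 2)) -
              Real.cos (((k : ℝ) - 1) * Real.pi / (4 * (m : ℝ) - 3))))
      = 4*Hf (psi m) - 4*Hf (phi m)
        + 2*(Real.sqrt 2 - 1)*(Rf (psi m) - Rf (phi m) - 4/Real.pi)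
        + 2*Qf (phi m) + 2 := by
  have hmr : (2:ℝ) ≤ (m:ℝ) := by exact_mod_cast hm
  have hπ : Real.pi ≠ 0 := Real.pi_ne_zero
  have hc3 : (4*(m:ℝ)-3) ≠ 0 := by linarith
  have hc1 : (4*(m:ℝ)-1) ≠ 0 := by linarith
  -- positivity of sines
  have hψpos : 0 < psi m := by
    unfold psi; exact div_pos Real.pi_pos (by linarith)
  have hψlt : psi m < Real.pi := by
    unfold psi
    rw [div_lt_iff₀ (by linarith)]
    nlinarith [Real.pi_pos]
  have hsψ : Real.sin (psi m) ≠ 0 := ne_of_gt (Real.sin_pos_of_pos_of_lt_pi hψpos hψlt)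
  have hφpos : 0 < phi m := by
    unfold phi; exact div_pos Real.pi_pos (by linarith)
  have hφlt : phi m < Real.pi := by
    unfold phi
    rw [div_lt_iff₀ (by linarith)]
    nlinarith [Real.pi_pos]
  have hsφ : Real.sin (phi m) ≠ 0 := ne_of_gt (Real.sin_pos_of_pos_of_lt_pi hφpos hφlt)
  -- combine sums
  have hneg : ∑ k ∈ Finset.Icc (m + 1) (2 * m - 1),
            (Real.cos ((2 * (k : ℝ) - 1) * Real.pi / (2 * (4 * (m : ℝ)) - 2)) -
              Real.cos (((k : ℝ) - 1) * Real.pi / (4 * (m : ℝ) - 3)))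
      = (Asum m m - Bsum m m) - (Asum m (2*m-1) - Bsum m (2*m-1)) := by
    have h1 : ∑ k ∈ Finset.Icc (m + 1) (2 * m - 1),
            (Real.cos ((2 * (k : ℝ) - 1) * Real.pi / (2 * (4 * (m : ℝ)) - 2)) -
              Real.cos (((k : ℝ) - 1) * Real.pi / (4 * (m : ℝ) - 3)))
        = - ∑ k ∈ Finset.Icc (m + 1) (2 * m - 1),
            (Real.cos (((k : ℝ) - 1) * Real.pi / (4 * (m : ℝ) - 3)) -
              Real.cos ((2 * (k : ℝ) - 1) * Real.pi / (2 * (4 * (m : ℝ)) - 2))) := by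
      rw [← Finset.sum_neg_distrib]
      exact Finset.sum_congr rfl fun k _ => by ring
    rw [h1]
    have h2 := icc_split m (by omega)
      (fun k => Real.cos (((k : ℝ) - 1) * Real.pi / (4 * (m : ℝ) - 3)) -
              Real.cos ((2 * (k : ℝ) - 1) * Real.pi / (2 * (4 * (m : ℝ)) - 2)))
    rw [hIcc m hm m, hIcc m hm (2*m-1)] at h2
    linarith [h2]
  rw [hIcc m hm m, hneg]
  rw [eqA m hsψ m, eqA m hsψ (2*m-1), eqB m hsφ m, eqB m hsφ (2*m-1)]
  have hE : (((2*m-1:ℕ)):ℝ) = 2*(m:ℝ)-1 := by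
    have : (1:ℕ) ≤ 2*m := by omega
    push_cast [Nat.cast_sub this]
    ring
  rw [hE]
  have a1 : ((m:ℝ)-1/2)*(2*psi m) = Real.pi/4 + psi m/2 := by
    unfold psi; have : (m:ℝ)*4-3 ≠ 0 := by linarith
    field_simp; ring
  have a2 : 2*(m:ℝ)*(phi m) = Real.pi/4 + phi m/2 := by
    unfold phi; have : (m:ℝ)*4-1 ≠ 0 := by linarith
    field_simp; ring
  have a3 : ((2*(m:ℝ)-1)-1/2)*(2*psi m) = Real.pi/2 := by
    unfold psi; have : (m:ℝ)*4-3 ≠ 0 := by linarith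
    field_simp; ring
  have a4 : 2*(2*(m:ℝ)-1)*(phi m) = Real.pi/2 - phi m := by
    unfold phi; have : (m:ℝ)*4-1 ≠ 0 := by linarith
    field_simp; ring
  rw [a1, a2, a3, a4, Real.sin_pi_div_two, Real.sin_pi_div_two_sub]
  simp only [Hf, Rf, Qf, Real.sin_pi_div_four]
  have hsψ' := hsψ
  have hsφ' := hsφ
  have hψ0 : psi m ≠ 0 := ne_of_gt hψpos
  have hφ0 : phi m ≠ 0 := ne_of_gt hφpos
  simp only [psi, phi] at hsψ' hsφ' hψ0 hφ0 ⊢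
  field_simp
  ring

lemma tendsto_psi : Tendsto psi atTop (nhdsWithin 0 (Set.Ioi 0)) := by
  apply tendsto_nhdsWithin_of_tendsto_nhds_of_eventually_within
  · apply Tendsto.div_atTop (tendsto_const_nhds (x := Real.pi))
    apply Tendsto.const_mul_atTop (by norm_num : (0:ℝ) < 2)
    apply tendsto_atTop_add_const_right
    apply Tendsto.const_mul_atTop (by norm_num : (0:ℝ) < 4)
    exact tendsto_natCast_atTop_atTop
  · filter_upwards [eventually_ge_atTop 1] with m hm
    have : (1:ℝ) ≤ (m:ℝ) := by exact_mod_cast hm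
    exact Set.mem_Ioi.2 (div_pos Real.pi_pos (by linarith))

lemma tendsto_phi : Tendsto phi atTop (nhdsWithin 0 (Set.Ioi 0)) := by
  apply tendsto_nhdsWithin_of_tendsto_nhds_of_eventually_within
  · apply Tendsto.div_atTop (tendsto_const_nhds (x := Real.pi))
    apply Tendsto.const_mul_atTop (by norm_num : (0:ℝ) < 2)
    apply tendsto_atTop_add_const_right
    apply Tendsto.const_mul_atTop (by norm_num : (0:ℝ) < 4)
    exact tendsto_natCast_atTop_atTop
  · filter_upwards [eventually_ge_atTop 1] with m hm
    have : (1:ℝ) ≤ (m:ℝ) := by exact_mod_cast hm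
    exact Set.mem_Ioi.2 (div_pos Real.pi_pos (by linarith))


lemma lim_E : Tendsto (fun m : ℕ => 4*Hf (psi m) - 4*Hf (phi m)
        + 2*(Real.sqrt 2 - 1)*(Rf (psi m) - Rf (phi m) - 4/Real.pi)
        + 2*Qf (phi m) + 2) atTop
    (nhds ((8 - 8 * Real.sqrt 2 + 2 * Real.pi) / Real.pi)) := by
  have h1 := lim_H.comp tendsto_psi
  have h2 := lim_H.comp tendsto_phi
  have h3 := lim_R.comp tendsto_psi
  have h4 := lim_R.comp tendsto_phi
  have h5 := lim_Q.comp tendsto_phi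
  have h := ((((h1.const_mul 4).sub (h2.const_mul 4)).add
      (((h3.sub h4).sub (tendsto_const_nhds (x := 4/Real.pi))).const_mul (2*(Real.sqrt 2 - 1)))).add
      (h5.const_mul 2)).add (tendsto_const_nhds (x := (2:ℝ)))
  have hval : 4*(Real.sqrt 2/4) - 4*(Real.sqrt 2/4) + 2*(Real.sqrt 2 - 1)*(((0:ℝ) - 0) - 4/Real.pi) + 2*0 + 2
      = (8 - 8 * Real.sqrt 2 + 2 * Real.pi) / Real.pi := by
    field_simp
    ring
  refine Tendsto.congr (fun m => ?_) (hval ▸ h)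
  simp only [Function.comp]

theorem stmt10 :
    Tendsto (fun m : ℕ =>
      (4 : ℝ) *
        ((∑ k ∈ Finset.Icc 1 ((4 * m) / 4),
            (Real.cos (((k : ℝ) - 1) * Real.pi / (4 * (m : ℝ) - 3)) -
              Real.cos ((2 * (k : ℝ) - 1) * Real.pi / (2 * (4 * (m : ℝ)) - 2)))) +
          ∑ k ∈ Finset.Icc ((4 * m) / 4 + 1) ((4 * m) / 2 - 1),
            (Real.cos ((2 * (k : ℝ) - 1) * Real.pi / (2 * (4 * (m : ℝ)) - 2)) -
              Real.cos (((k : ℝ) - 1) * Real.pi / (4 * (m : ℝ) - 3)))))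
      atTop (nhds ((8 - 8 * Real.sqrt 2 + 2 * Real.pi) / Real.pi)) := by
  apply Filter.Tendsto.congr' _ lim_E
  filter_upwards [eventually_ge_atTop 2] with m hm
  have e1 : 4 * m / 4 = m := by omega
  have e2 : 4 * m / 2 = 2 * m := by omega
  rw [e1, e2]
  exact (key m hm).symm
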